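/- Let q be a primitive integral binary quadratic form and f a nonzero integer. Then q is properly equivalent (under the SL₂(ℤ) action) to a form q' = ax² + bxy + cy² with gcd(a, f) = 1. -/

import Mathlib

/-- An integral binary quadratic form ax² + bxy + cy². -/
structure BQF where
  a : ℤ
  b : ℤ
  c : ℤ

namespace BQF

/-- Value of the form at (x, y). -/
def eval (q : BQF) (x y : ℤ) : ℤ := q.a * x ^ 2 + q.b * x * y + q.c * y ^ 2

/-- Discriminant b² - 4ac. -/
def disc (q : BQF) : ℤ := q.b ^ 2 - 4 * q.a * q.c

/-- A form is primitive if gcd(a, b, c) = 1. -/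
def IsPrimitive (q : BQF) : Prop := Int.gcd (Int.gcd q.a q.b) q.c = 1

/-- Right action: (q·M)(x,y) = q(px + ry, sx + ty) for M = [[p,r],[s,t]]. -/
def act (q : BQF) (M : Matrix (Fin 2) (Fin 2) ℤ) : BQF :=
  ⟨q.eval (M 0 0) (M 1 0),
   q.eval (M 0 0 + M 0 1) (M 1 0 + M 1 1) - q.eval (M 0 0) (M 1 0) - q.eval (M 0 1) (M 1 1),
   q.eval (M 0 1) (M 1 1)⟩

/-- Proper equivalence: equivalence under the SL₂(ℤ) action. -/
def ProperEquiv (q q' : BQF) : Prop :=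
  ∃ U : Matrix.SpecialLinearGroup (Fin 2) ℤ, q.act U.1 = q'

end BQF

/-- R_g = [[f,g],[0,1]] for g < f, and R_f = [[1,0],[0,f]] when g = f. -/
def Rmat (f g : ℤ) : Matrix (Fin 2) (Fin 2) ℤ :=
  if g = f then !![1, 0; 0, f] else !![f, g; 0, 1]

theorem exists_coprime_rep (q : BQF) (hq : q.IsPrimitive) (f : ℤ) (hf : f ≠ 0) :
    ∃ x y : ℤ, IsCoprime x y ∧ Int.gcd (q.eval x y) f = 1 := by
  classical
  set F := f.natAbs with hF
  have hF0 : F ≠ 0 := Int.natAbs_ne_zero.mpr hf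
  set P : Finset ℕ := F.primeFactors with hP
  set S1 : Finset ℕ := P.filter (fun p : ℕ => ¬ (p:ℤ) ∣ q.a) with hS1
  set S2 : Finset ℕ := P.filter (fun p : ℕ => (p:ℤ) ∣ q.a ∧ ¬ (p:ℤ) ∣ q.c) with hS2
  set S3 : Finset ℕ := P.filter (fun p : ℕ => (p:ℤ) ∣ q.a ∧ (p:ℤ) ∣ q.c) with hS3
  set x : ℤ := ∏ p ∈ S2, (p:ℤ) with hx
  set m : ℤ := ∏ p ∈ S1, (p:ℤ) with hm
  set w : ℤ := ∏ p ∈ S3, (p:ℤ) with hw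
  set n : ℤ := x * w with hn
  have prodmem : ∀ (S : Finset ℕ), S ⊆ P → ∀ p : ℕ, p.Prime →
      ((p:ℤ) ∣ ∏ r ∈ S, (r:ℤ) ↔ p ∈ S) := by
    intro S hS p hp
    rw [(Nat.prime_iff_prime_int.mp hp).dvd_finset_prod_iff]
    constructor
    · rintro ⟨i, hi, hdvd⟩
      have hip : i.Prime := (Nat.mem_primeFactors.mp (hS hi)).1
      have : p ∣ i := Int.natCast_dvd_natCast.mp hdvd
      rwa [(Nat.prime_dvd_prime_iff_eq hp hip).mp this]
    · intro h; exact ⟨p, h, dvd_refl _⟩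
  have hS1P : S1 ⊆ P := Finset.filter_subset _ _
  have hS2P : S2 ⊆ P := Finset.filter_subset _ _
  have hS3P : S3 ⊆ P := Finset.filter_subset _ _
  -- m and n are coprime
  have hmn : IsCoprime m n := by
    rw [Int.isCoprime_iff_gcd_eq_one]
    by_contra hg
    obtain ⟨p, hp, hpd⟩ := Nat.exists_prime_and_dvd hg
    have hpg : (p:ℤ) ∣ (Int.gcd m n : ℤ) := Int.natCast_dvd_natCast.mpr hpd
    have hpm : (p:ℤ) ∣ m := hpg.trans (Int.gcd_dvd_left _ _)
    have hpn : (p:ℤ) ∣ n := hpg.trans (Int.gcd_dvd_right _ _)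
    have hp1 : p ∈ S1 := (prodmem S1 hS1P p hp).mp hpm
    have hpa : ¬ (p:ℤ) ∣ q.a := (Finset.mem_filter.mp hp1).2
    have hpip := Nat.prime_iff_prime_int.mp hp
    rcases hpip.dvd_mul.mp hpn with h2 | h3
    · exact hpa ((Finset.mem_filter.mp ((prodmem S2 hS2P p hp).mp h2)).2).1
    · exact hpa ((Finset.mem_filter.mp ((prodmem S3 hS3P p hp).mp h3)).2).1
  obtain ⟨s, t, hst⟩ := hmn
  set y : ℤ := s * m with hy
  have hy1 : y + t * n = 1 := hst
  have hxy : IsCoprime x y := ⟨t * w, 1, by rw [hn] at hy1; linarith [hy1]⟩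
  refine ⟨x, y, hxy, ?_⟩
  by_contra hg
  obtain ⟨p, hp, hpd⟩ := Nat.exists_prime_and_dvd hg
  have hpg : (p:ℤ) ∣ (Int.gcd (q.eval x y) f : ℤ) := Int.natCast_dvd_natCast.mpr hpd
  have hpe : (p:ℤ) ∣ q.eval x y := hpg.trans (Int.gcd_dvd_left _ _)
  have hpf : (p:ℤ) ∣ f := hpg.trans (Int.gcd_dvd_right _ _)
  have hpP : p ∈ P := Nat.mem_primeFactors.mpr
    ⟨hp, Int.natCast_dvd_natCast.mp (Int.dvd_natAbs.mpr hpf), hF0⟩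
  have hpip := Nat.prime_iff_prime_int.mp hp
  have hne : q.eval x y = q.a * x ^ 2 + q.b * x * y + q.c * y ^ 2 := rfl
  have hpx : p ∉ S2 → ¬ (p:ℤ) ∣ x := fun h hd => h ((prodmem S2 hS2P p hp).mp hd)
  -- p | n → p ∤ y  (since y = 1 - t*n)
  have hny : (p:ℤ) ∣ n → ¬ (p:ℤ) ∣ y := by
    intro hdn hdy
    have : (p:ℤ) ∣ 1 := hy1 ▸ dvd_add hdy (hdn.mul_left t)
    exact hp.ne_one (Nat.dvd_one.mp (Int.natCast_dvd_natCast.mp (by exact_mod_cast this)))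
  by_cases ha : (p:ℤ) ∣ q.a
  · by_cases hc : (p:ℤ) ∣ q.c
    · -- p ∈ S3 : p ∤ b, p ∤ x, p ∤ y
      have hp3 : p ∈ S3 := Finset.mem_filter.mpr ⟨hpP, ha, hc⟩
      have hb : ¬ (p:ℤ) ∣ q.b := by
        intro hb
        have h2 : (p:ℤ) ∣ ((Int.gcd (Int.gcd q.a q.b) q.c : ℕ) : ℤ) :=
          Int.dvd_coe_gcd (Int.dvd_coe_gcd ha hb) hc
        rw [hq] at h2
        exact hp.ne_one (Nat.dvd_one.mp (Int.natCast_dvd_natCast.mp (by exact_mod_cast h2)))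
      have hxnd : ¬ (p:ℤ) ∣ x := hpx (fun h2 => ((Finset.mem_filter.mp h2).2).2 hc)
      have hynd : ¬ (p:ℤ) ∣ y := hny (((prodmem S3 hS3P p hp).mpr hp3).mul_left x)
      -- p | a x² + c y², so p | b x y
      have : (p:ℤ) ∣ q.b * x * y := by
        have h1 : (p:ℤ) ∣ q.a * x ^ 2 + q.c * y ^ 2 :=
          dvd_add (ha.mul_right _) (hc.mul_right _)
        have := dvd_sub hpe h1
        rw [hne] at this; convert this using 1; rfl; ring
      rcases hpip.dvd_mul.mp this with h | h
      · exact (hpip.dvd_mul.mp h).elim hb hxnd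
      · exact hynd h
    · -- p ∈ S2 : p | x, p ∤ c, p ∤ y
      have hp2 : p ∈ S2 := Finset.mem_filter.mpr ⟨hpP, ha, hc⟩
      have hdx : (p:ℤ) ∣ x := (prodmem S2 hS2P p hp).mpr hp2
      have hynd : ¬ (p:ℤ) ∣ y := hny (hdx.mul_right w)
      have : (p:ℤ) ∣ q.c * y ^ 2 := by
        have h1 : (p:ℤ) ∣ q.a * x ^ 2 + q.b * x * y :=
          dvd_add (ha.mul_right _) ((hdx.mul_left q.b).mul_right y)
        have := dvd_sub hpe h1
        rw [hne] at this; convert this using 1; rfl; ring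
      rcases hpip.dvd_mul.mp this with h | h
      · exact hc h
      · exact hynd (hpip.dvd_of_dvd_pow h)
  · -- p ∈ S1 : p | m | y, p ∤ a, p ∤ x
    have hp1 : p ∈ S1 := Finset.mem_filter.mpr ⟨hpP, ha⟩
    have hdy : (p:ℤ) ∣ y := ((prodmem S1 hS1P p hp).mpr hp1).mul_left s
    have hxnd : ¬ (p:ℤ) ∣ x := hpx (fun h2 => ha ((Finset.mem_filter.mp h2).2).1
      )
    have : (p:ℤ) ∣ q.a * x ^ 2 := by
      have h1 : (p:ℤ) ∣ q.b * x * y + q.c * y ^ 2 :=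
        dvd_add (hdy.mul_left _) ((hdy.pow two_ne_zero).mul_left q.c)
      have := dvd_sub hpe h1
      rw [hne] at this; convert this using 1; rfl; ring
    rcases hpip.dvd_mul.mp this with h | h
    · exact ha h
    · exact hxnd (hpip.dvd_of_dvd_pow h)

theorem stmt3 (q : BQF) (hq : q.IsPrimitive) (f : ℤ) (hf : f ≠ 0) :
    ∃ q' : BQF, BQF.ProperEquiv q q' ∧ Int.gcd q'.a f = 1 := by
  obtain ⟨x, y, hxy, hg⟩ := exists_coprime_rep q hq f hf
  obtain ⟨u, v, huv⟩ := hxy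
  set U : Matrix (Fin 2) (Fin 2) ℤ := !![x, -v; y, u] with hU
  have hdet : U.det = 1 := by
    rw [hU, Matrix.det_fin_two_of]; linarith [huv]
  refine ⟨q.act U, ⟨⟨U, hdet⟩, rfl⟩, ?_⟩
  have : (q.act U).a = q.eval x y := rfl
  rw [this]
  exact hg
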